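/- For every τ ∈ A₀ and every t ≥ 0, the following upper estimate holds in [0, ∞]: Σ_{(m,n) ∈ ℕ₊×ℕ₊} |m + nτ|^{−2t} ≤ 3 · Σ_{p=1}^{∞} 4^{(p−1)(1−t)} · ( min{ 1 + |τ|²/4^{p−1}, |τ|² } )^{−t}. -/

import Mathlib

open Complex Metric Filter Set
open scoped ENNReal NNReal Topology

noncomputable section

/-- The parameter space `A₀ = {u+iv : u ≥ 0, v ≥ 1}`. -/
def A0 : Set ℂ := {τ : ℂ | 0 ≤ τ.re ∧ 1 ≤ τ.im}

/-- The phase space `X = {z : |z - 1/2| ≤ 1/2}`. -/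
def Xcl : Set ℂ := {z : ℂ | ‖z - 1/2‖ ≤ 1/2}

/-- The alphabet `I_τ = {m + nτ : m, n ∈ ℕ₊}`. -/
def Itau (τ : ℂ) : Set ℂ := {b : ℂ | ∃ m n : ℕ+, b = ((m : ℕ) : ℂ) + ((n : ℕ) : ℂ) * τ}

/-- The generator `φ_b(z) = 1/(z+b)`. -/
def phi (b z : ℂ) : ℂ := 1 / (z + b)

set_option maxHeartbeats 1000000 in
/-- Upper estimate for `Σ_{b ∈ I_τ} |b|^{-2t}` in `[0,∞]`. -/
theorem stmt5 :
    ∀ τ ∈ A0, ∀ t : ℝ, 0 ≤ t →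
      (∑' p : ℕ+ × ℕ+,
          ((‖((p.1 : ℕ) : ℂ) + ((p.2 : ℕ) : ℂ) * τ‖₊ : ℝ≥0∞) ^ (-(2 * t)))) ≤
        3 * ∑' p : ℕ+,
          (4 : ℝ≥0∞) ^ ((((p : ℕ) : ℝ) - 1) * (1 - t)) *
            (ENNReal.ofReal (min (1 + ‖τ‖ ^ 2 / (4 : ℝ) ^ (((p : ℕ) : ℝ) - 1)) (‖τ‖ ^ 2))) ^ (-t) := by
  intro τ hτ t ht
  obtain ⟨hre, him⟩ := hτ
  set T2 : ℝ := ‖τ‖ ^ 2 with hT2def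
  have hT2 : 1 ≤ T2 := by
    have h1 : τ.re ^ 2 + τ.im ^ 2 = T2 := by
      rw [hT2def, Complex.sq_norm, Complex.normSq_apply]; ring
    nlinarith
  -- norm lower bound
  have normsq : ∀ m n : ℕ+, ((m:ℕ):ℝ)^2 + ((n:ℕ):ℝ)^2 * T2 ≤ ‖((m:ℕ):ℂ) + ((n:ℕ):ℂ)*τ‖^2 := by
    intro m n
    have h1 : ‖((m:ℕ):ℂ) + ((n:ℕ):ℂ)*τ‖^2 = ((m:ℕ):ℝ)^2 + 2*(m:ℕ)*(n:ℕ)*τ.re + ((n:ℕ):ℝ)^2 * T2 := by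
      rw [Complex.sq_norm, Complex.normSq_apply]
      simp only [Complex.add_re, Complex.add_im, Complex.mul_re, Complex.mul_im,
        Complex.natCast_re, Complex.natCast_im, hT2def,
        Complex.sq_norm, Complex.normSq_apply]
      ring
    have hm : (0:ℝ) ≤ (m:ℕ) := Nat.cast_nonneg _
    have hn : (0:ℝ) ≤ (n:ℕ) := Nat.cast_nonneg _
    nlinarith [mul_nonneg (mul_nonneg hm hn) hre]
  set f : ℕ+ × ℕ+ → ℝ≥0∞ :=
    fun q => ((‖((q.1:ℕ):ℂ) + ((q.2:ℕ):ℂ) * τ‖₊ : ℝ≥0∞) ^ (-(2*t))) with hfdef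
  set P : ℕ+ × ℕ+ → ℕ+ := fun q => ⟨Nat.log 2 (max (q.1:ℕ) (q.2:ℕ)) + 1, Nat.succ_pos _⟩ with hPdef
  rw [← ENNReal.tsum_fiberwise f P, ← ENNReal.tsum_mul_left]
  refine ENNReal.tsum_le_tsum fun p => ?_
  set k : ℕ := (p:ℕ) - 1 with hkdef
  have hkr : ((p:ℕ):ℝ) - 1 = (k:ℝ) := by
    rw [hkdef]
    have : 1 ≤ (p:ℕ) := p.pos
    rw [Nat.cast_sub this]; norm_num
  set D : ℝ := min ((4:ℝ)^k + T2) ((4:ℝ)^k * T2) with hDdef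
  have h4k1 : (1:ℝ) ≤ (4:ℝ)^k := one_le_pow₀ (by norm_num)
  have hDpos : (1:ℝ) ≤ D := le_min (by nlinarith) (by nlinarith)
  -- pointwise bound on the fiber
  have hfb : ∀ q : (P ⁻¹' {p} : Set (ℕ+ × ℕ+)), f q ≤ (ENNReal.ofReal D) ^ (-t) := by
    rintro ⟨⟨m, n⟩, hq⟩
    have hq' : Nat.log 2 (max (m:ℕ) (n:ℕ)) + 1 = (p:ℕ) := congrArg PNat.val hq
    have hlog : Nat.log 2 (max (m:ℕ) (n:ℕ)) = k := by
      have := p.pos; omega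
    have hmaxpos : max (m:ℕ) (n:ℕ) ≠ 0 := by
      have := m.pos; omega
    have hmax : 2^k ≤ max (m:ℕ) (n:ℕ) := hlog ▸ Nat.pow_log_le_self 2 hmaxpos
    have h4keq : ((2^k : ℕ) : ℝ)^2 = (4:ℝ)^k := by
      push_cast
      rw [← pow_mul, mul_comm, pow_mul]
      norm_num
    have hD : D ≤ ‖((m:ℕ):ℂ) + ((n:ℕ):ℂ)*τ‖^2 := by
      have hns := normsq m n
      rcases le_or_gt (2^k) (m:ℕ) with hc | hc
      · refine le_trans (min_le_left _ _) (le_trans ?_ hns)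
        have hm2 : (4:ℝ)^k ≤ ((m:ℕ):ℝ)^2 := by
          rw [← h4keq]
          have : ((2^k : ℕ) : ℝ) ≤ ((m:ℕ):ℝ) := Nat.cast_le.mpr hc
          nlinarith [Nat.cast_nonneg (α := ℝ) (2^k)]
        have hn1 : (1:ℝ) ≤ ((n:ℕ):ℝ) := by exact_mod_cast n.pos
        have hn2 : T2 ≤ ((n:ℕ):ℝ)^2 * T2 :=
          le_mul_of_one_le_left (by linarith) (by nlinarith)
        linarith
      · have hcn : 2^k ≤ (n:ℕ) := by omega
        refine le_trans (min_le_right _ _) (le_trans ?_ hns)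
        have hn2 : (4:ℝ)^k ≤ ((n:ℕ):ℝ)^2 := by
          rw [← h4keq]
          have : ((2^k : ℕ) : ℝ) ≤ ((n:ℕ):ℝ) := Nat.cast_le.mpr hcn
          nlinarith [Nat.cast_nonneg (α := ℝ) (2^k)]
        have hm1 : (1:ℝ) ≤ ((m:ℕ):ℝ) := by exact_mod_cast m.pos
        have hn2' : (4:ℝ)^k * T2 ≤ ((n:ℕ):ℝ)^2 * T2 :=
          mul_le_mul_of_nonneg_right hn2 (by linarith)
        nlinarith
    -- ENNReal manipulation
    set b : ℂ := ((m:ℕ):ℂ) + ((n:ℕ):ℂ)*τ with hbdef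
    have hfq : f (⟨(m, n), hq⟩ : (P ⁻¹' {p} : Set (ℕ+ × ℕ+))) = (ENNReal.ofReal (‖b‖^2)) ^ (-t) := by
      show ((‖b‖₊ : ℝ≥0∞)) ^ (-(2*t)) = _
      rw [← enorm_eq_nnnorm, ← ofReal_norm]
      rw [show -(2*t) = (2:ℝ) * (-t) by ring, ENNReal.rpow_mul,
        ENNReal.ofReal_rpow_of_nonneg (norm_nonneg b) (by norm_num)]
      norm_num
    rw [hfq, ENNReal.rpow_neg, ENNReal.rpow_neg]
    exact ENNReal.inv_le_inv.mpr
      (ENNReal.rpow_le_rpow (ENNReal.ofReal_le_ofReal hD) ht)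
  -- cardinality of the fiber
  have hcard : (P ⁻¹' {p} : Set (ℕ+ × ℕ+)).encard ≤ ((3 * 4^k : ℕ) : ℝ≥0∞) := by
    set S : Finset (ℕ × ℕ) :=
      (Finset.Ico (2^k) (2^(k+1)) ×ˢ Finset.Ico 1 (2^(k+1))) ∪
      (Finset.Ico 1 (2^k) ×ˢ Finset.Ico (2^k) (2^(k+1))) with hSdef
    have hinj : Function.Injective (fun q : ℕ+ × ℕ+ => ((q.1 : ℕ), (q.2 : ℕ))) := by
      rintro ⟨a, b⟩ ⟨c, d⟩ h
      simp only [Prod.mk.injEq] at h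
      exact Prod.ext (PNat.coe_injective h.1) (PNat.coe_injective h.2)
    have hsub : (fun q : ℕ+ × ℕ+ => ((q.1 : ℕ), (q.2 : ℕ))) '' (P ⁻¹' {p}) ⊆ ↑S := by
      rintro _ ⟨⟨m, n⟩, hq, rfl⟩
      have hq' : Nat.log 2 (max (m:ℕ) (n:ℕ)) + 1 = (p:ℕ) := congrArg PNat.val hq
      have hlog : Nat.log 2 (max (m:ℕ) (n:ℕ)) = k := by
        have := p.pos; omega
      have hmaxpos : max (m:ℕ) (n:ℕ) ≠ 0 := by
        have := m.pos; omega
      have hmax : 2^k ≤ max (m:ℕ) (n:ℕ) := hlog ▸ Nat.pow_log_le_self 2 hmaxpos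
      have hmax2 : max (m:ℕ) (n:ℕ) < 2^(k+1) := hlog ▸ Nat.lt_pow_succ_log_self (by norm_num) _
      have hm := m.pos
      have hn := n.pos
      simp only [hSdef, Finset.coe_union, Finset.coe_product, Set.mem_union, Set.mem_prod,
        Finset.coe_Ico, Set.mem_Ico]
      omega
    have hN : (P ⁻¹' {p} : Set (ℕ+ × ℕ+)).encard ≤ ((3 * 4^k : ℕ) : ℕ∞) := by
      calc (P ⁻¹' {p} : Set (ℕ+ × ℕ+)).encard
          = ((fun q : ℕ+ × ℕ+ => ((q.1 : ℕ), (q.2 : ℕ))) '' (P ⁻¹' {p})).encard :=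
            (hinj.encard_image _).symm
        _ ≤ (↑S : Set (ℕ × ℕ)).encard := Set.encard_mono hsub
        _ = (S.card : ℕ∞) := Set.encard_coe_eq_coe_finsetCard S
        _ ≤ ((3 * 4^k : ℕ) : ℕ∞) := by
            have hc : S.card ≤ 3 * 4^k := by
              refine le_trans (Finset.card_union_le _ _) ?_
              simp only [Finset.card_product, Nat.card_Ico]
              have h2 : (2:ℕ)^(k+1) = 2 * 2^k := by ring
              have h4 : (4:ℕ)^k = 2^k * 2^k := by rw [← mul_pow]; norm_num
              have h1 : 1 ≤ (2:ℕ)^k := Nat.one_le_two_pow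
              have e1 : (2:ℕ)^(k+1) - 2^k = 2^k := by omega
              have e2 : (2:ℕ)^(k+1) - 1 ≤ 2 * 2^k := by omega
              have e3 : (2:ℕ)^k - 1 ≤ 2^k := by omega
              calc (2^(k+1)-2^k)*(2^(k+1)-1) + ((2:ℕ)^k-1)*(2^(k+1)-2^k)
                  ≤ 2^k*(2*2^k) + 2^k*2^k := by
                    rw [e1]
                    exact add_le_add (Nat.mul_le_mul_left _ e2) (Nat.mul_le_mul_right _ e3)
                _ = 3*4^k := by rw [h4]; ring
            exact_mod_cast hc
    exact_mod_cast hN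
  -- combine
  calc ∑' (q : (P ⁻¹' {p} : Set (ℕ+ × ℕ+))), f q
      ≤ ∑' (_ : (P ⁻¹' {p} : Set (ℕ+ × ℕ+))), (ENNReal.ofReal D) ^ (-t) :=
        ENNReal.tsum_le_tsum hfb
    _ = (P ⁻¹' {p} : Set (ℕ+ × ℕ+)).encard * (ENNReal.ofReal D) ^ (-t) :=
        ENNReal.tsum_set_const _ _
    _ ≤ ((3 * 4^k : ℕ) : ℝ≥0∞) * (ENNReal.ofReal D) ^ (-t) := by
        exact mul_le_mul_left hcard _
    _ = 3 * ((4 : ℝ≥0∞) ^ ((((p:ℕ):ℝ) - 1) * (1 - t)) *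
          (ENNReal.ofReal (min (1 + T2 / (4:ℝ) ^ (((p:ℕ):ℝ) - 1)) T2)) ^ (-t)) := by
        rw [hkr, Real.rpow_natCast]
        have h4ne : ((4:ℝ)^k) ≠ 0 := by positivity
        have hmin : (4:ℝ)^k * min (1 + T2 / (4:ℝ)^k) T2 = D := by
          rw [hDdef, mul_min_of_nonneg _ _ (by positivity : (0:ℝ) ≤ (4:ℝ)^k)]
          congr 1
          field_simp
        have hof : (4:ℝ≥0∞)^((k:ℝ)) = ENNReal.ofReal ((4:ℝ)^k) := by
          rw [ENNReal.rpow_natCast, ENNReal.ofReal_pow (by norm_num), ENNReal.ofReal_ofNat]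
        have hsplit : (4:ℝ≥0∞) ^ ((k:ℝ) * (1 - t))
            = (4:ℝ≥0∞)^((k:ℝ)) * ((4:ℝ≥0∞)^((k:ℝ)))^(-t) := by
          rw [← ENNReal.rpow_mul]
          rw [← ENNReal.rpow_add _ _ (by norm_num) (by norm_num)]
          ring_nf
        rw [hsplit, hof]
        have hDsplit : (ENNReal.ofReal D)^(-t)
            = ENNReal.ofReal ((4:ℝ)^k) ^ (-t) * ENNReal.ofReal (min (1 + T2/(4:ℝ)^k) T2) ^ (-t) := by
          rw [← ENNReal.mul_rpow_of_ne_top ENNReal.ofReal_ne_top ENNReal.ofReal_ne_top,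
            ← ENNReal.ofReal_mul (by positivity), hmin]
        rw [hDsplit]
        have hcast : ((3 * 4^k : ℕ) : ℝ≥0∞) = 3 * ENNReal.ofReal ((4:ℝ)^k) := by
          rw [← hof]
          push_cast
          rw [ENNReal.rpow_natCast]
        rw [hcast]
        ring
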